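/- For m ≥ 1 let G_m ⊆ U(2) be the matrix group generated by X = [[0,1],[1,0]] and Z^{1/m} = diag(1, ω_{2m}) where ω_{2m} = e^{2πi/(2m)}. Then the controlled-Z gate CZ = diag(1,1,1,-1) ∈ U(4) satisfies CZ (G_m ⊗ G_m) CZ† = G_m ⊗ G_m, CZ is entangling, and hence G_m is an entangling group for every m ∈ ℕ. -/

import Mathlib

open Matrix Kronecker

/-- The tensor (Kronecker) square of a set of matrices. -/
def tensorSet (S : Set (Matrix (Fin 2) (Fin 2) ℂ)) :
    Set (Matrix (Fin 2 × Fin 2) (Fin 2 × Fin 2) ℂ) :=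
  {x | ∃ a ∈ S, ∃ b ∈ S, x = a ⊗ₖ b}

/-- The SWAP operation on ℂ² ⊗ ℂ², as a matrix. -/
def swapMat : Matrix (Fin 2 × Fin 2) (Fin 2 × Fin 2) ℂ :=
  fun p q => if p.1 = q.2 ∧ p.2 = q.1 then 1 else 0

/-- A two-qubit unitary `V` is entangling if it is neither of the form `A ⊗ B`
nor `SWAP · (A ⊗ B)` for unitaries `A, B`. -/
def Entangling (V : Matrix (Fin 2 × Fin 2) (Fin 2 × Fin 2) ℂ) : Prop :=
  ∀ A B : Matrix (Fin 2) (Fin 2) ℂ,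
    A ∈ Matrix.unitaryGroup (Fin 2) ℂ → B ∈ Matrix.unitaryGroup (Fin 2) ℂ →
      V ≠ A ⊗ₖ B ∧ V ≠ swapMat * (A ⊗ₖ B)

/-- `N` is a projective normaliser of the set of matrices `S`. -/
def ProjNorm {m : Type*} [Fintype m] (N : Matrix m m ℂ) (S : Set (Matrix m m ℂ)) : Prop :=
  ∀ g ∈ S, ∃ g' ∈ S, ∃ c : ℂ, ‖c‖ = 1 ∧ N * g * Nᴴ = c • g'

/-- The controlled-Z gate diag(1,1,1,-1). -/
def CZgate : Matrix (Fin 2 × Fin 2) (Fin 2 × Fin 2) ℂ :=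
  fun p q => if p = q then (if p.1 = 1 ∧ p.2 = 1 then -1 else 1) else 0

/- ### Auxiliary lemmas -/

lemma conjEntry (M : Matrix (Fin 2 × Fin 2) (Fin 2 × Fin 2) ℂ) (p q : Fin 2 × Fin 2) :
    (CZgate * M * CZgateᴴ) p q =
      (if p.1 = 1 ∧ p.2 = 1 then -1 else 1) * ((if q.1 = 1 ∧ q.2 = 1 then -1 else 1) * M p q) := by
  obtain ⟨i, j⟩ := p
  obtain ⟨k, l⟩ := q
  fin_cases i <;> fin_cases j <;> fin_cases k <;> fin_cases l <;>
    simp [Matrix.mul_apply, conjTranspose_apply, CZgate, Fintype.sum_prod_type,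
      Fin.sum_univ_two, Prod.ext_iff]

/-- Diagonal 2×2 matrix. -/
def DiagM (a : Matrix (Fin 2) (Fin 2) ℂ) : Prop := a 0 1 = 0 ∧ a 1 0 = 0
/-- Antidiagonal 2×2 matrix. -/
def AntiM (a : Matrix (Fin 2) (Fin 2) ℂ) : Prop := a 0 0 = 0 ∧ a 1 1 = 0
/-- The Pauli Z matrix. -/
noncomputable def Zmat : Matrix (Fin 2) (Fin 2) ℂ := !![1, 0; 0, -1]

lemma zmul (b : Matrix (Fin 2) (Fin 2) ℂ) (l : Fin 2) :
    (Zmat * b) 0 l = b 0 l ∧ (Zmat * b) 1 l = -(b 1 l) := by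
  constructor <;> simp [Zmat, Matrix.mul_apply, Fin.sum_univ_two]

lemma c1 (a b : Matrix (Fin 2) (Fin 2) ℂ) (ha : DiagM a) (hb : DiagM b) :
    CZgate * (a ⊗ₖ b) * CZgateᴴ = a ⊗ₖ b := by
  ext ⟨i, j⟩ ⟨k, l⟩
  rw [conjEntry]
  fin_cases i <;> fin_cases j <;> fin_cases k <;> fin_cases l <;>
    simp [kroneckerMap_apply, ha.1, ha.2, hb.1, hb.2]

lemma c2 (a b : Matrix (Fin 2) (Fin 2) ℂ) (ha : AntiM a) (hb : DiagM b) :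
    CZgate * (a ⊗ₖ b) * CZgateᴴ = a ⊗ₖ (Zmat * b) := by
  ext ⟨i, j⟩ ⟨k, l⟩
  rw [conjEntry]
  fin_cases i <;> fin_cases j <;> fin_cases k <;> fin_cases l <;>
    simp [kroneckerMap_apply, ha.1, ha.2, hb.1, hb.2, (zmul b _).1, (zmul b _).2]

lemma c3 (a b : Matrix (Fin 2) (Fin 2) ℂ) (ha : DiagM a) (hb : AntiM b) :
    CZgate * (a ⊗ₖ b) * CZgateᴴ = (Zmat * a) ⊗ₖ b := by
  ext ⟨i, j⟩ ⟨k, l⟩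
  rw [conjEntry]
  fin_cases i <;> fin_cases j <;> fin_cases k <;> fin_cases l <;>
    simp [kroneckerMap_apply, ha.1, ha.2, hb.1, hb.2, (zmul a _).1, (zmul a _).2]

lemma c4 (a b : Matrix (Fin 2) (Fin 2) ℂ) (ha : AntiM a) (hb : AntiM b) :
    CZgate * (a ⊗ₖ b) * CZgateᴴ = (-(Zmat * a)) ⊗ₖ (Zmat * b) := by
  ext ⟨i, j⟩ ⟨k, l⟩
  rw [conjEntry]
  fin_cases i <;> fin_cases j <;> fin_cases k <;> fin_cases l <;>
    simp [kroneckerMap_apply, ha.1, ha.2, hb.1, hb.2, (zmul a _).1, (zmul a _).2,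
      (zmul b _).1, (zmul b _).2]

lemma classify (X Zm : Matrix (Fin 2) (Fin 2) ℂ)
    (hX : AntiM X) (hZ : DiagM Zm) (a : Matrix (Fin 2) (Fin 2) ℂ)
    (ha : a ∈ Submonoid.closure {X, Zm}) : DiagM a ∨ AntiM a := by
  induction ha using Submonoid.closure_induction with
  | mem x hx =>
    rcases hx with h | h
    · exact Or.inr (h ▸ hX)
    · exact Or.inl (h ▸ hZ)
  | one => exact Or.inl ⟨rfl, rfl⟩
  | mul x y _ _ hx hy =>
    rcases hx with hx | hx <;> rcases hy with hy | hy
    · exact Or.inl ⟨by simp [Matrix.mul_apply, Fin.sum_univ_two, hx.1, hy.1],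
        by simp [Matrix.mul_apply, Fin.sum_univ_two, hx.2, hy.2]⟩
    · exact Or.inr ⟨by simp [Matrix.mul_apply, Fin.sum_univ_two, hx.1, hy.1],
        by simp [Matrix.mul_apply, Fin.sum_univ_two, hx.2, hy.2]⟩
    · exact Or.inr ⟨by simp [Matrix.mul_apply, Fin.sum_univ_two, hx.1, hy.2],
        by simp [Matrix.mul_apply, Fin.sum_univ_two, hx.2, hy.1]⟩
    · exact Or.inl ⟨by simp [Matrix.mul_apply, Fin.sum_univ_two, hx.1, hy.2],
        by simp [Matrix.mul_apply, Fin.sum_univ_two, hx.2, hy.1]⟩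

lemma diagPow (ω : ℂ) (n : ℕ) : (!![1, 0; 0, ω]) ^ n = !![1, 0; 0, ω ^ n] := by
  induction n with
  | zero => simp [Matrix.one_fin_two]
  | succ k ih =>
    rw [pow_succ, ih]
    ext i j
    fin_cases i <;> fin_cases j <;> simp [Matrix.mul_apply, Fin.sum_univ_two, pow_succ]

lemma omegaPow (m : ℕ) (hm : 1 ≤ m) (ω : ℂ)
    (hω : ω = Complex.exp (2 * Real.pi * Complex.I / (2 * m))) : ω ^ m = -1 := by
  have hm0 : (m : ℂ) ≠ 0 := Nat.cast_ne_zero.mpr (by omega)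
  rw [hω, ← Complex.exp_nat_mul]
  have : (m : ℂ) * (2 * Real.pi * Complex.I / (2 * m)) = Real.pi * Complex.I := by
    field_simp
  rw [this, Complex.exp_pi_mul_I]

lemma CZH : CZgateᴴ = CZgate := by
  ext ⟨i, j⟩ ⟨k, l⟩
  fin_cases i <;> fin_cases j <;> fin_cases k <;> fin_cases l <;>
    simp [CZgate, conjTranspose_apply, Prod.ext_iff]

lemma CZsq : CZgate * CZgate = 1 := by
  ext ⟨i, j⟩ ⟨k, l⟩
  fin_cases i <;> fin_cases j <;> fin_cases k <;> fin_cases l <;>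
    simp [CZgate, Matrix.mul_apply, Fintype.sum_prod_type, Fin.sum_univ_two,
      Prod.ext_iff, Matrix.one_apply]

lemma CZunitary : CZgate ∈ Matrix.unitaryGroup (Fin 2 × Fin 2) ℂ := by
  constructor <;> simp [Matrix.star_eq_conjTranspose, CZH, CZsq]

lemma swapMul (M : Matrix (Fin 2 × Fin 2) (Fin 2 × Fin 2) ℂ) (p q : Fin 2 × Fin 2) :
    (swapMat * M) p q = M (p.2, p.1) q := by
  obtain ⟨i, j⟩ := p
  fin_cases i <;> fin_cases j <;>
    simp [swapMat, Matrix.mul_apply, Fintype.sum_prod_type, Fin.sum_univ_two]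

lemma CZentangling : Entangling CZgate := by
  intro A B _ _
  constructor
  · intro h
    have e1 := congrFun (congrFun h ((0 : Fin 2), (0 : Fin 2))) ((0 : Fin 2), (0 : Fin 2))
    have e2 := congrFun (congrFun h ((0 : Fin 2), (1 : Fin 2))) ((0 : Fin 2), (1 : Fin 2))
    have e3 := congrFun (congrFun h ((1 : Fin 2), (0 : Fin 2))) ((1 : Fin 2), (0 : Fin 2))
    have e4 := congrFun (congrFun h ((1 : Fin 2), (1 : Fin 2))) ((1 : Fin 2), (1 : Fin 2))
    simp [CZgate, kroneckerMap_apply] at e1 e2 e3 e4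
    have h5 : (A 0 0 * B 0 0) * (A 1 1 * B 1 1) = (A 0 0 * B 1 1) * (A 1 1 * B 0 0) := by ring
    rw [← e1, ← e2, ← e3, ← e4] at h5
    norm_num at h5
  · intro h
    have e1 := congrFun (congrFun h ((0 : Fin 2), (0 : Fin 2))) ((0 : Fin 2), (0 : Fin 2))
    have e4 := congrFun (congrFun h ((1 : Fin 2), (1 : Fin 2))) ((1 : Fin 2), (1 : Fin 2))
    have e0 := congrFun (congrFun h ((0 : Fin 2), (1 : Fin 2))) ((1 : Fin 2), (0 : Fin 2))
    rw [swapMul] at e1 e4 e0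
    simp [CZgate, kroneckerMap_apply, Prod.ext_iff] at e1 e4 e0
    rcases e0 with h0 | h0
    · rw [h0, zero_mul] at e4; norm_num at e4
    · rw [h0, mul_zero] at e1; norm_num at e1

/-- For m ≥ 1 let G_m ⊆ U(2) be the matrix group generated by
X = [[0,1],[1,0]] and Z^{1/m} = diag(1, ω_{2m}).  Then the controlled-Z gate
CZ = diag(1,1,1,-1) satisfies CZ (G_m⊗G_m) CZ† = G_m⊗G_m, CZ is entangling, and hence
G_m is an entangling group for every m ∈ ℕ. -/
theorem stmt_16 (m : ℕ) (hm : 1 ≤ m)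
    (ω : ℂ) (hω : ω = Complex.exp (2 * Real.pi * Complex.I / (2 * m)))
    (X Zm : Matrix (Fin 2) (Fin 2) ℂ)
    (hX : X = !![0, 1; 1, 0]) (hZm : Zm = !![1, 0; 0, ω])
    (Gm : Set (Matrix (Fin 2) (Fin 2) ℂ))
    (hGm : Gm = (Submonoid.closure {X, Zm} : Submonoid (Matrix (Fin 2) (Fin 2) ℂ))) :
    (fun g => CZgate * g * CZgateᴴ) '' tensorSet Gm = tensorSet Gm ∧
    CZgate ∈ Matrix.unitaryGroup (Fin 2 × Fin 2) ℂ ∧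
    Entangling CZgate ∧
    (∃ N : Matrix (Fin 2 × Fin 2) (Fin 2 × Fin 2) ℂ,
      N ∈ Matrix.unitaryGroup (Fin 2 × Fin 2) ℂ ∧
      ProjNorm N (tensorSet Gm) ∧ Entangling N) := by
  -- membership facts
  have hXa : AntiM X := by rw [hX]; exact ⟨rfl, rfl⟩
  have hZd : DiagM Zm := by rw [hZm]; exact ⟨rfl, rfl⟩
  have hXmem : X ∈ Submonoid.closure {X, Zm} :=
    Submonoid.subset_closure (Set.mem_insert _ _)
  have hZmmem : Zm ∈ Submonoid.closure {X, Zm} :=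
    Submonoid.subset_closure (Set.mem_insert_of_mem _ rfl)
  have hZmatEq : Zmat = Zm ^ m := by
    rw [hZm, diagPow, omegaPow m hm ω hω]; rfl
  have hZmat : Zmat ∈ Submonoid.closure {X, Zm} := hZmatEq ▸ pow_mem hZmmem m
  have hneg1eq : ((Zmat * X) * (Zmat * X)) = (-1 : Matrix (Fin 2) (Fin 2) ℂ) := by
    rw [hX]
    ext i j
    fin_cases i <;> fin_cases j <;>
      simp [Zmat, Matrix.mul_apply, Fin.sum_univ_two, Matrix.one_apply]
  have hneg1 : (-1 : Matrix (Fin 2) (Fin 2) ℂ) ∈ Submonoid.closure {X, Zm} :=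
    hneg1eq ▸ mul_mem (mul_mem hZmat hXmem) (mul_mem hZmat hXmem)
  have hmemGm : ∀ a, a ∈ Gm ↔ a ∈ Submonoid.closure {X, Zm} := by
    intro a; rw [hGm]; exact SetLike.mem_coe
  -- key: conjugation by CZ preserves tensorSet Gm
  have key : ∀ g ∈ tensorSet Gm, CZgate * g * CZgateᴴ ∈ tensorSet Gm := by
    rintro g ⟨a, ha, b, hb, rfl⟩
    have ha' := (hmemGm a).mp ha
    have hb' := (hmemGm b).mp hb
    rcases classify X Zm hXa hZd a ha' with hda | haa <;>
      rcases classify X Zm hXa hZd b hb' with hdb | hab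
    · exact ⟨a, ha, b, hb, c1 a b hda hdb⟩
    · exact ⟨Zmat * a, (hmemGm _).mpr (mul_mem hZmat ha'), b, hb, c3 a b hda hab⟩
    · exact ⟨a, ha, Zmat * b, (hmemGm _).mpr (mul_mem hZmat hb'), c2 a b haa hdb⟩
    · refine ⟨-(Zmat * a), ?_, Zmat * b, (hmemGm _).mpr (mul_mem hZmat hb'),
        c4 a b haa hab⟩
      have : -(Zmat * a) = (-1 : Matrix (Fin 2) (Fin 2) ℂ) * (Zmat * a) := by
        rw [neg_one_mul]
      rw [hmemGm, this]
      exact mul_mem hneg1 (mul_mem hZmat ha')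
  have himg : (fun g => CZgate * g * CZgateᴴ) '' tensorSet Gm = tensorSet Gm := by
    apply Set.Subset.antisymm
    · rintro x ⟨g, hg, rfl⟩
      exact key g hg
    · intro t ht
      refine ⟨CZgate * t * CZgateᴴ, key t ht, ?_⟩
      have : CZgate * (CZgate * t * CZgateᴴ) * CZgateᴴ = t := by
        rw [CZH]
        simp only [← Matrix.mul_assoc, CZsq, Matrix.one_mul]
        rw [Matrix.mul_assoc, CZsq, Matrix.mul_one]
      simp only [this]
  refine ⟨himg, CZunitary, CZentangling, CZgate, CZunitary, ?_, CZentangling⟩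
  intro g hg
  exact ⟨CZgate * g * CZgateᴴ, key g hg, 1, by simp, (one_smul _ _).symm⟩
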